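/- Let d ≥ 1 and let f : ℝ^d → ℝ^d be a similarity transformation, f(x) = r·(A x) + b, where r > 0, A is a linear isometry of ℝ^d (a d×d orthogonal matrix), and b ∈ ℝ^d. Then for all Borel probability measures Q and μ on ℝ^d and every x ∈ ℝ^d, D(f(x) | f_*Q, f_*μ) = D(x | Q, μ), where f_* denotes pushforward of measures under f; consequently ∫ D(y | f_*Q, f_*μ) d(f_*μ)(y) = ∫ D(x | Q, μ) dμ(x). (Similarity invariance of the curve depth: Lemma S5.4 / similarity-invariance part of Theorem 3.2 of the paper.) -/

import Mathlib

open MeasureTheory Set Filter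
open scoped ENNReal RealInnerProductSpace

noncomputable section

abbrev Euc (d : ℕ) := EuclideanSpace ℝ (Fin d)

def halfSpace {d : ℕ} (u x : Euc d) : Set (Euc d) := {y | ⟪x, u⟫ ≤ ⟪y, u⟫}

/-- Point curve depth `D(x | Q, μ)`, with the `ℝ≥0∞` division conventions
`a / 0 = ∞` for `a > 0` and `0 / 0 = 0`. -/
def pointDepth {d : ℕ} (Q μ : Measure (Euc d)) (x : Euc d) : ℝ≥0∞ :=
  ⨅ (u : Euc d) (_ : ‖u‖ = 1), Q (halfSpace u x) / μ (halfSpace u x)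

def curveDepth {d : ℕ} (Q μ : Measure (Euc d)) : ℝ≥0∞ :=
  ∫⁻ x, pointDepth Q μ x ∂μ

lemma halfSpace_measurable {d : ℕ} (u x : Euc d) : MeasurableSet (halfSpace u x) :=
  (isClosed_le continuous_const (continuous_id.inner continuous_const)).measurableSet

/-- Similarity invariance of the curve depth (Lemma S5.4 / Theorem 3.2 of the paper):
for any similarity `f x = r • (A x) + b` with `r > 0`, `A` a linear isometry
(orthogonal transformation) of `ℝ^d` and `b ∈ ℝ^d`, the point curve depth and the
curve depth are invariant under the pushforward by `f`. -/
theorem pointDepth_similarity_invariance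
    (d : ℕ) (hd : 1 ≤ d)
    (r : ℝ) (hr : 0 < r) (A : Euc d ≃ₗᵢ[ℝ] Euc d) (b : Euc d)
    (Q μ : Measure (Euc d)) [IsProbabilityMeasure Q] [IsProbabilityMeasure μ] :
    (∀ x : Euc d,
      pointDepth (Q.map (fun z => r • A z + b)) (μ.map (fun z => r • A z + b))
          (r • A x + b)
        = pointDepth Q μ x) ∧
    curveDepth (Q.map (fun z => r • A z + b)) (μ.map (fun z => r • A z + b))
      = curveDepth Q μ := by
  have hcont : Continuous (fun z : Euc d => r • A z + b) :=
    ((A.continuous.const_smul r).add continuous_const)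
  have hfm : Measurable (fun z : Euc d => r • A z + b) := hcont.measurable
  have hinner : ∀ (w u : Euc d), ⟪A w, u⟫ = ⟪w, A.symm u⟫ := by
    intro w u
    rw [← A.inner_map_map w (A.symm u), A.apply_symm_apply]
  have hpre : ∀ u x : Euc d,
      (fun z : Euc d => r • A z + b) ⁻¹' halfSpace u (r • A x + b)
        = halfSpace (A.symm u) x := by
    intro u x
    ext z
    simp only [halfSpace, mem_preimage, mem_setOf_eq, inner_add_left,
      real_inner_smul_left, add_le_add_iff_right, hinner]
    exact (mul_le_mul_iff_right₀ hr)
  have hpoint : ∀ x : Euc d,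
      pointDepth (Q.map (fun z => r • A z + b)) (μ.map (fun z => r • A z + b))
          (r • A x + b) = pointDepth Q μ x := by
    intro x
    unfold pointDepth
    have h1 : ∀ u : Euc d,
        (Q.map (fun z => r • A z + b)) (halfSpace u (r • A x + b))
          / (μ.map (fun z => r • A z + b)) (halfSpace u (r • A x + b))
        = Q (halfSpace (A.symm u) x) / μ (halfSpace (A.symm u) x) := by
      intro u
      rw [Measure.map_apply hfm (halfSpace_measurable _ _),
        Measure.map_apply hfm (halfSpace_measurable _ _), hpre]
    calc ⨅ (u : Euc d) (_ : ‖u‖ = 1),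
          (Q.map (fun z => r • A z + b)) (halfSpace u (r • A x + b))
            / (μ.map (fun z => r • A z + b)) (halfSpace u (r • A x + b))
        = ⨅ (u : Euc d) (_ : ‖u‖ = 1),
            Q (halfSpace (A.symm u) x) / μ (halfSpace (A.symm u) x) := by
          exact iInf_congr fun u => iInf_congr fun _ => h1 u
      _ = ⨅ (u : Euc d) (_ : ‖A.symm u‖ = 1),
            Q (halfSpace (A.symm u) x) / μ (halfSpace (A.symm u) x) := by
          simp only [A.symm.norm_map]
      _ = ⨅ (v : Euc d) (_ : ‖v‖ = 1), Q (halfSpace v x) / μ (halfSpace v x) := by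
          exact A.symm.toEquiv.iInf_comp
            (g := fun v => ⨅ (_ : ‖v‖ = 1), Q (halfSpace v x) / μ (halfSpace v x))
  refine ⟨hpoint, ?_⟩
  -- the similarity as a measurable equivalence
  let h : Euc d ≃ₜ Euc d :=
    { toFun := fun z => r • A z + b
      invFun := fun y => A.symm (r⁻¹ • (y - b))
      left_inv := by
        intro z
        simp [smul_smul, inv_mul_cancel₀ hr.ne']
      right_inv := by
        intro y
        simp [smul_smul, mul_inv_cancel₀ hr.ne']
      continuous_toFun := hcont
      continuous_invFun := A.symm.continuous.comp
        ((continuous_id.sub continuous_const).const_smul r⁻¹) }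
  let e : Euc d ≃ᵐ Euc d := h.toMeasurableEquiv
  have hmap : ∀ ν : Measure (Euc d), ν.map (fun z => r • A z + b) = ν.map e := fun _ => rfl
  unfold curveDepth
  rw [hmap μ, MeasureTheory.lintegral_map_equiv]
  exact lintegral_congr fun x => hpoint x
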